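/- If G is block-decomposable and a node o has four outgoing edges and no incoming edges (respectively, four incoming edges and no outgoing edges), then in every block decomposition of G the node o is the identification of the outlets of two outfork blocks (respectively, two infork blocks); in particular each of the four neighbors of o has degree 1 in G, and the connected component of o is the 5-node star with center o and all four edges directed away from o (respectively, toward o). -/

import Mathlib

/-- The six block shapes: spike, triangle, infork, outfork, diamond, square. -/
inductive BlockShape : Type
  | spike | triangle | infork | outfork | diamond | square
  deriving DecidableEq

namespace BlockShape

/-- Number of nodes of each block shape. -/
def numNodes : BlockShape → ℕ
  | spike => 2
  | triangle => 3
  | infork => 3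
  | outfork => 3
  | diamond => 4
  | square => 5

/-- The directed edges of each block shape.
For the spike the nodes are `x = 0, y = 1` with edge `x → y`.
For the triangle the nodes are `0, 1, 2` with edges `0 → 1 → 2 → 0`.
For the infork the nodes are `x = 0, y = 1, c = 2` with edges `x → c`, `y → c`.
For the outfork the nodes are `x = 0, y = 1, c = 2` with edges `c → x`, `c → y`.
For the diamond the nodes are `p = 0, q = 1, x = 2, y = 3` with boundary edges
`p → x, x → q, q → y, y → p` and mid-edge `q → p`.
For the square the nodes are the center `c = 0` and corners `v1 = 1, …, v4 = 4`, with
edges `v1 → v2 → v3 → v4 → v1`, `c → v1`, `v2 → c`, `c → v3`, `v4 → c`. -/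
def edges : (s : BlockShape) → List (Fin s.numNodes × Fin s.numNodes)
  | spike => ([(0, 1)] : List (Fin 2 × Fin 2))
  | triangle => ([(0, 1), (1, 2), (2, 0)] : List (Fin 3 × Fin 3))
  | infork => ([(0, 2), (1, 2)] : List (Fin 3 × Fin 3))
  | outfork => ([(2, 0), (2, 1)] : List (Fin 3 × Fin 3))
  | diamond => ([(0, 2), (2, 1), (1, 3), (3, 0), (1, 0)] : List (Fin 4 × Fin 4))
  | square => ([(1, 2), (2, 3), (3, 4), (4, 1), (0, 1), (2, 0), (0, 3), (4, 0)] :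
      List (Fin 5 × Fin 5))

/-- The outlets (white nodes) of each block shape. -/
def IsOutlet : (s : BlockShape) → Fin s.numNodes → Prop
  | spike, _ => True
  | triangle, _ => True
  | infork, i => (i : ℕ) = 2
  | outfork, i => (i : ℕ) = 2
  | diamond, i => (i : ℕ) = 0 ∨ (i : ℕ) = 1
  | square, i => (i : ℕ) = 0

/-- The degree of a node inside its block (number of incident edges). -/
def blockDeg (s : BlockShape) (i : Fin s.numNodes) : ℕ :=
  s.edges.countP fun e => decide (e.1 = i) || decide (e.2 = i)

end BlockShape

/-- A directed multigraph on a vertex type `V` is given by its edge multiplicity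
function `G : V → V → ℕ`.  It is a directed graph in our sense if it has no loops
and no 2-cycles. -/
def IsDiGraph {V : Type} (G : V → V → ℕ) : Prop :=
  (∀ v, G v v = 0) ∧ ∀ x y, G x y = 0 ∨ G y x = 0

/-- Degree of a node: the number of incident edges counted with multiplicity. -/
def degree {V : Type} [Fintype V] (G : V → V → ℕ) (v : V) : ℕ :=
  ∑ w, (G v w + G w v)

/-- Two nodes are adjacent if some edge joins them (in either direction). -/
def Adj {V : Type} (G : V → V → ℕ) (x y : V) : Prop := 0 < G x y + G y x

/-- `Reach G x y` : `y` lies in the connected component of `x`. -/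
def Reach {V : Type} (G : V → V → ℕ) : V → V → Prop := Relation.ReflTransGen (Adj G)

/-- The connected component of a node, as a finset. -/
noncomputable def component {V : Type} [Fintype V] (G : V → V → ℕ) (v : V) : Finset V :=
  letI := Classical.decPred fun w => Reach G v w
  Finset.univ.filter (Reach G v)

/-- Total number of block edges mapped onto the ordered pair `(x, y)` by the gluing data. -/
def blockMult {V : Type} [DecidableEq V] (n : ℕ) (shape : Fin n → BlockShape)
    (emb : (b : Fin n) → Fin (shape b).numNodes → V) (x y : V) : ℕ :=
  ∑ b : Fin n, (shape b).edges.countP fun e => decide (emb b e.1 = x ∧ emb b e.2 = y)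

/-- A block decomposition of the directed multigraph `G` : a finite collection of blocks
together with an identification of their nodes with the nodes of `G` such that
* each block is embedded injectively,
* nodes of two distinct blocks may be identified only if both are outlets,
* each outlet is identified with at most one other outlet (no vertex lies in three blocks),
* every vertex of `G` comes from some block, and
* the multiplicity of each edge of `G` is the number of block edges giving it minus the
  number of block edges giving the reversed edge (two parallel edges with the same
  direction are kept as a double edge; two parallel edges with opposite directions
  annihilate each other). -/
structure BlockDecomposition {V : Type} [Fintype V] [DecidableEq V] (G : V → V → ℕ) :
    Type where
  n : ℕ
  shape : Fin n → BlockShape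
  emb : (b : Fin n) → Fin (shape b).numNodes → V
  emb_inj : ∀ b, Function.Injective (emb b)
  glue_outlets : ∀ (b c : Fin n) (i : Fin (shape b).numNodes) (j : Fin (shape c).numNodes),
    emb b i = emb c j → b ≠ c → (shape b).IsOutlet i ∧ (shape c).IsOutlet j
  atMostTwo : ∀ (b c d : Fin n) (i : Fin (shape b).numNodes) (j : Fin (shape c).numNodes)
    (k : Fin (shape d).numNodes), emb b i = emb c j → emb b i = emb d k →
    b = c ∨ b = d ∨ c = d
  covers : ∀ v : V, ∃ b i, emb b i = v
  edge_eq : ∀ x y : V, G x y = blockMult n shape emb x y - blockMult n shape emb y x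

/-- The number of block edges of a decomposition lying over the ordered pair `(x, y)`. -/
def BlockDecomposition.mult {V : Type} [Fintype V] [DecidableEq V] {G : V → V → ℕ}
    (D : BlockDecomposition G) : V → V → ℕ :=
  blockMult D.n D.shape D.emb

/-- A graph is (block-)decomposable if it admits a block decomposition. -/
def Decomposable {V : Type} [Fintype V] [DecidableEq V] (G : V → V → ℕ) : Prop :=
  Nonempty (BlockDecomposition G)

/-- The edge `e` of block `b` is annihilated in the decomposition `D` : some edge of
another block lies over the same pair of vertices with the opposite direction. -/
def BlockDecomposition.EdgeAnnihilated {V : Type} [Fintype V] [DecidableEq V]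
    {G : V → V → ℕ} (D : BlockDecomposition G) (b : Fin D.n)
    (e : Fin (D.shape b).numNodes × Fin (D.shape b).numNodes) : Prop :=
  e ∈ (D.shape b).edges ∧
    ∃ (c : Fin D.n) (f : Fin (D.shape c).numNodes × Fin (D.shape c).numNodes),
      c ≠ b ∧ f ∈ (D.shape c).edges ∧ D.emb c f.1 = D.emb b e.2 ∧ D.emb c f.2 = D.emb b e.1
set_option maxHeartbeats 1000000
set_option linter.unusedSectionVars false

namespace BlockShape

def targets (s : BlockShape) (i : Fin s.numNodes) : List (Fin s.numNodes) :=
  (s.edges.filter (fun e => e.1 = i)).map Prod.snd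
def sources (s : BlockShape) (i : Fin s.numNodes) : List (Fin s.numNodes) :=
  (s.edges.filter (fun e => e.2 = i)).map Prod.fst

lemma targets_nodup : ∀ (s : BlockShape) (i : Fin s.numNodes), (targets s i).Nodup := by
  intro s; cases s <;> decide

lemma net_le : ∀ (s : BlockShape) (i : Fin s.numNodes),
    (targets s i).length ≤ (sources s i).length + 2 := by
  intro s; cases s <;> decide

lemma net_eq_two : ∀ (s : BlockShape) (i : Fin s.numNodes),
    (targets s i).length = (sources s i).length + 2 → s = outfork ∧ (i : ℕ) = 2 := by
  intro s; cases s <;> decide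

lemma center_facts : ∀ s : BlockShape, s = outfork → ∀ i : Fin s.numNodes, (i : ℕ) = 2 →
    (targets s i).length = 2 ∧ sources s i = [] ∧
    ∀ j ∈ targets s i, (j : ℕ) ≠ 2 ∧ sources s j = [i] ∧
      targets s j = [] := by rintro s rfl; decide

lemma outlet_outfork : ∀ s : BlockShape, s = outfork →
    ∀ j : Fin s.numNodes, IsOutlet s j → (j : ℕ) = 2 := by
  rintro s rfl j h; exact h

end BlockShape


section

variable {α V : Type} [Fintype V] [DecidableEq V]



lemma sum_countP_snd (l : List α) (p : α → Prop) [DecidablePred p] (f : α → V) :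

    ∑ w : V, l.countP (fun a => decide (p a ∧ f a = w)) = l.countP (fun a => decide (p a)) := by

  induction l with

  | nil => simp

  | cons a l ih =>

    simp only [List.countP_cons, Finset.sum_add_distrib, ih]

    congr 1

    by_cases h : p a

    · simp [h]

    · simp [h]



lemma sum_countP_fst (l : List α) (p : α → Prop) [DecidablePred p] (f : α → V) :

    ∑ w : V, l.countP (fun a => decide (f a = w ∧ p a)) = l.countP (fun a => decide (p a)) := by

  rw [← sum_countP_snd l p f]

  refine Finset.sum_congr rfl fun w _ => List.countP_congr fun a _ => by

    simp [and_comm]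



lemma countP_pair_eq_count {n : ℕ} (l : List (Fin n × Fin n)) (emb : Fin n → V)

    (hinj : Function.Injective emb) (i : Fin n) (w : V) :

    l.countP (fun e => decide (emb e.1 = emb i ∧ emb e.2 = w)) =

      (((l.filter (fun e => e.1 = i)).map Prod.snd).map emb).count w := by

  rw [List.count_eq_countP, List.countP_map, List.countP_map, List.countP_filter]

  refine List.countP_congr fun e _ => ?_

  simp only [Function.comp, decide_eq_true_eq, Bool.and_eq_true, decide_eq_true_iff,

    beq_iff_eq]

  constructor

  · rintro ⟨h1, h2⟩; exact ⟨h2, hinj h1⟩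

  · rintro ⟨h2, h1⟩; exact ⟨by rw [h1], h2⟩



lemma countP_pair_eq_count' {n : ℕ} (l : List (Fin n × Fin n)) (emb : Fin n → V)

    (hinj : Function.Injective emb) (i : Fin n) (z : V) :

    l.countP (fun e => decide (emb e.1 = z ∧ emb e.2 = emb i)) =

      (((l.filter (fun e => e.2 = i)).map Prod.fst).map emb).count z := by

  rw [List.count_eq_countP, List.countP_map, List.countP_map, List.countP_filter]

  refine List.countP_congr fun e _ => ?_

  simp only [Function.comp, decide_eq_true_eq, Bool.and_eq_true, decide_eq_true_iff,

    beq_iff_eq]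

  constructor

  · rintro ⟨h1, h2⟩; exact ⟨h1, hinj h2⟩

  · rintro ⟨h2, h1⟩; exact ⟨h2, by rw [h1]⟩



omit [Fintype V] in

lemma countP_zero_of_not_mem {n : ℕ} (l : List (Fin n × Fin n)) (emb : Fin n → V)

    (o : V) (h : ∀ k, emb k ≠ o) (w : V) :

    l.countP (fun e => decide (emb e.1 = o ∧ emb e.2 = w)) = 0 ∧

    l.countP (fun e => decide (emb e.1 = w ∧ emb e.2 = o)) = 0 := by

  constructor <;>

  · rw [List.countP_eq_zero]

    rintro e _ he

    simp only [decide_eq_true_eq] at he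

    first | exact h e.1 he.1 | exact h e.2 he.2



lemma countP_eq_count_targets (s : BlockShape) (emb : Fin s.numNodes → V)

    (hinj : Function.Injective emb) (i : Fin s.numNodes) (w : V) :

    s.edges.countP (fun e => decide (emb e.1 = emb i ∧ emb e.2 = w)) =

      ((s.targets i).map emb).count w :=

  countP_pair_eq_count s.edges emb hinj i w



lemma countP_eq_count_sources (s : BlockShape) (emb : Fin s.numNodes → V)

    (hinj : Function.Injective emb) (i : Fin s.numNodes) (z : V) :

    s.edges.countP (fun e => decide (emb e.1 = z ∧ emb e.2 = emb i)) =

      ((s.sources i).map emb).count z :=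

  countP_pair_eq_count' s.edges emb hinj i z

section Main

variable {V : Type} [Fintype V] [DecidableEq V]



lemma main_outfork (G : V → V → ℕ) (o : V)

    (h4 : ∑ w, G o w = 4) (h0 : ∑ w, G w o = 0) (D : BlockDecomposition G) :

    (∃ b b' : Fin D.n, b ≠ b' ∧

        D.shape b = BlockShape.outfork ∧ D.shape b' = BlockShape.outfork ∧

        (∃ i, D.emb b i = o ∧ (i : ℕ) = 2) ∧ (∃ j, D.emb b' j = o ∧ (j : ℕ) = 2) ∧

        (∀ (c : Fin D.n) (k : Fin (D.shape c).numNodes), D.emb c k = o → c = b ∨ c = b')) ∧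

      (∀ w, G o w ≠ 0 → degree G w = 1) ∧

      (component G o).card = 5 ∧

      (∀ x ∈ component G o, x ≠ o → G o x = 1 ∧ G x o = 0 ∧ degree G x = 1) := by

  classical

  set mult := D.mult with hmult

  -- integer identity

  have hZ : ∀ x y, (G x y : ℤ) - G y x = (mult x y : ℤ) - mult y x := by

    intro x y

    have e1 := D.edge_eq x y

    have e2 := D.edge_eq y x

    change G x y = mult x y - mult y x at e1

    change G y x = mult y x - mult x y at e2

    omega

  -- per-block out/in counts at o

  set outc : Fin D.n → ℕ :=

    fun b => (D.shape b).edges.countP (fun e => decide (D.emb b e.1 = o)) with houtc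

  set inc : Fin D.n → ℕ :=

    fun b => (D.shape b).edges.countP (fun e => decide (D.emb b e.2 = o)) with hinc

  have sum_out : ∑ w, mult o w = ∑ b, outc b := by

    rw [hmult]

    unfold BlockDecomposition.mult blockMult

    rw [Finset.sum_comm]

    refine Finset.sum_congr rfl fun b _ => ?_

    exact sum_countP_snd (D.shape b).edges (fun e => D.emb b e.1 = o) (fun e => D.emb b e.2)

  have sum_in : ∑ w, mult w o = ∑ b, inc b := by

    rw [hmult]

    unfold BlockDecomposition.mult blockMult

    rw [Finset.sum_comm]

    refine Finset.sum_congr rfl fun b _ => ?_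

    exact sum_countP_fst (D.shape b).edges (fun e => D.emb b e.2 = o) (fun e => D.emb b e.1)

  set net : Fin D.n → ℤ := fun b => (outc b : ℤ) - inc b with hnet

  have sumZ : ∑ b, net b = 4 := by

    have h1 : ∑ b, net b = ((∑ b, outc b : ℕ) : ℤ) - ((∑ b, inc b : ℕ) : ℤ) := by

      rw [hnet]; push_cast; exact Finset.sum_sub_distrib _ _

    rw [h1, ← sum_out, ← sum_in]

    have h2 : ((∑ w, mult o w : ℕ) : ℤ) - ((∑ w, mult w o : ℕ) : ℤ)

        = ((∑ w, G o w : ℕ) : ℤ) - ((∑ w, G w o : ℕ) : ℤ) := by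

      push_cast

      rw [← Finset.sum_sub_distrib, ← Finset.sum_sub_distrib]

      exact Finset.sum_congr rfl fun w _ => (hZ o w).symm

    rw [h2, h4, h0]; norm_num

  -- counts in terms of targets/sources when o is in the image

  have outc_eq : ∀ (b : Fin D.n) (i : Fin (D.shape b).numNodes), D.emb b i = o →

      outc b = (BlockShape.targets (D.shape b) i).length ∧

      inc b = (BlockShape.sources (D.shape b) i).length := by

    intro b i hi

    constructor

    · rw [houtc]

      simp only

      rw [BlockShape.targets, List.length_map, ← List.countP_eq_length_filter]

      refine List.countP_congr fun e _ => ?_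

      simp only [decide_eq_true_eq]

      rw [← hi]

      exact ⟨fun h => (D.emb_inj b h), fun h => by rw [h]⟩

    · rw [hinc]

      simp only

      rw [BlockShape.sources, List.length_map, ← List.countP_eq_length_filter]

      refine List.countP_congr fun e _ => ?_

      simp only [decide_eq_true_eq]

      rw [← hi]

      exact ⟨fun h => (D.emb_inj b h), fun h => by rw [h]⟩

  have zero_of_not : ∀ b : Fin D.n, (∀ k, D.emb b k ≠ o) → outc b = 0 ∧ inc b = 0 := by

    intro b hb

    constructor

    · rw [houtc]; simp only

      rw [List.countP_eq_zero]

      intro e _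

      simp only [decide_eq_true_eq]

      exact hb e.1

    · rw [hinc]; simp only

      rw [List.countP_eq_zero]

      intro e _

      simp only [decide_eq_true_eq]

      exact hb e.2

  have net_le2 : ∀ b, net b ≤ 2 := by

    intro b

    by_cases hb : ∃ k, D.emb b k = o

    · obtain ⟨i, hi⟩ := hb

      obtain ⟨ho, hicnt⟩ := outc_eq b i hi

      have := BlockShape.net_le (D.shape b) i

      rw [hnet]; simp only; omega

    · push_neg at hb

      obtain ⟨h1, h2⟩ := zero_of_not b hb

      rw [hnet]; simp only [h1, h2]; norm_num

  have net_zero : ∀ b : Fin D.n, (∀ k, D.emb b k ≠ o) → net b = 0 := by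

    intro b hb

    obtain ⟨h1, h2⟩ := zero_of_not b hb

    rw [hnet]; simp only [h1, h2]; norm_num

  -- find the two blocks

  obtain ⟨b0, i0, hi0⟩ := D.covers o

  have hb1 : ∃ b1, b1 ≠ b0 ∧ 0 < net b1 := by

    by_contra h

    push_neg at h

    have hsplit : ∑ b, net b = net b0 + ∑ b ∈ Finset.univ.erase b0, net b := by

      rw [Finset.add_sum_erase _ _ (Finset.mem_univ b0)]

    have hle : ∑ b ∈ Finset.univ.erase b0, net b ≤ 0 := by

      refine Finset.sum_nonpos fun b hb => ?_

      exact h b (Finset.ne_of_mem_erase hb)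

    have := net_le2 b0

    omega

  obtain ⟨b1, hb1ne, hb1pos⟩ := hb1

  have hi1 : ∃ i1, D.emb b1 i1 = o := by

    by_contra h

    push_neg at h

    have := net_zero b1 h

    omega

  obtain ⟨i1, hi1⟩ := hi1

  have onlyb : ∀ (c : Fin D.n) (k : Fin (D.shape c).numNodes), D.emb c k = o →

      c = b0 ∨ c = b1 := by

    intro c k hc

    have := D.atMostTwo b0 b1 c i0 i1 k (by rw [hi0, hi1]) (by rw [hi0, hc])

    rcases this with h | h | h

    · exact absurd h.symm hb1ne

    · exact Or.inl h.symm

    · exact Or.inr h.symm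

  have net_others : ∀ b : Fin D.n, b ≠ b0 → b ≠ b1 → net b = 0 := by

    intro b h1 h2

    refine net_zero b fun k hk => ?_

    rcases onlyb b k hk with h | h

    · exact h1 h

    · exact h2 h

  have hpairsum : net b0 + net b1 = 4 := by

    have : ∑ b ∈ ({b0, b1} : Finset (Fin D.n)), net b = ∑ b, net b := by

      refine Finset.sum_subset (Finset.subset_univ _) fun b _ hb => ?_

      simp only [Finset.mem_insert, Finset.mem_singleton, not_or] at hb

      exact net_others b hb.1 hb.2

    rw [Finset.sum_pair (Ne.symm hb1ne)] at this

    omega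

  have hnet0 : net b0 = 2 := le_antisymm (net_le2 b0) (by have := net_le2 b1; omega)

  have hnet1 : net b1 = 2 := le_antisymm (net_le2 b1) (by omega)

  -- both are outfork centers

  have shape_of : ∀ (b : Fin D.n) (i : Fin (D.shape b).numNodes), D.emb b i = o →

      net b = 2 → D.shape b = BlockShape.outfork ∧ (i : ℕ) = 2 := by

    intro b i hi h2

    obtain ⟨ho, hic⟩ := outc_eq b i hi

    refine BlockShape.net_eq_two (D.shape b) i ?_

    rw [hnet] at h2; simp only at h2

    omega

  obtain ⟨hs0, hi02⟩ := shape_of b0 i0 hi0 hnet0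

  obtain ⟨hs1, hi12⟩ := shape_of b1 i1 hi1 hnet1

  have hc0 := BlockShape.center_facts _ hs0 i0 hi02

  have hc1 := BlockShape.center_facts _ hs1 i1 hi12

  -- a non-outlet node of an outfork block lies in no other block

  have notin : ∀ b : Fin D.n, D.shape b = BlockShape.outfork →

      ∀ j : Fin (D.shape b).numNodes, (j : ℕ) ≠ 2 →

      ∀ c : Fin D.n, c ≠ b → ∀ k, D.emb c k ≠ D.emb b j := by

    intro b hsb j hj c hc k hk

    exact hj (BlockShape.outlet_outfork _ hsb j (D.glue_outlets c b k j hk hc).2)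

  have mult_def : ∀ x y, mult x y =

      ∑ b, (D.shape b).edges.countP (fun e => decide (D.emb b e.1 = x ∧ D.emb b e.2 = y)) :=

    fun x y => rfl

  -- no edges into o

  have multin : ∀ z, mult z o = 0 := by

    intro z

    rw [mult_def]

    refine Finset.sum_eq_zero fun b _ => ?_

    by_cases hb : ∃ k, D.emb b k = o

    · obtain ⟨i, hi⟩ := hb

      rcases onlyb b i hi with rfl | rfl

      · have hii : i = i0 := D.emb_inj b (by rw [hi, hi0])

        subst hii

        rw [← hi, countP_eq_count_sources _ _ (D.emb_inj b) i z, hc0.2.1]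

        simp

      · have hii : i = i1 := D.emb_inj b (by rw [hi, hi1])

        subst hii

        rw [← hi, countP_eq_count_sources _ _ (D.emb_inj b) i z, hc1.2.1]

        simp

    · push_neg at hb

      exact (countP_zero_of_not_mem _ _ o hb z).2

  -- the neighbour list

  set L : List V := ((BlockShape.targets (D.shape b0) i0).map (D.emb b0)) ++

      ((BlockShape.targets (D.shape b1) i1).map (D.emb b1)) with hL

  have multo : ∀ w, mult o w = L.count w := by

    intro w

    rw [mult_def]

    have hzero : ∀ b ∈ Finset.univ, b ∉ ({b0, b1} : Finset (Fin D.n)) →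

        (D.shape b).edges.countP

          (fun e => decide (D.emb b e.1 = o ∧ D.emb b e.2 = w)) = 0 := by

      intro b _ hb

      simp only [Finset.mem_insert, Finset.mem_singleton, not_or] at hb

      refine (countP_zero_of_not_mem _ _ o (fun k hk => ?_) w).1

      rcases onlyb b k hk with h | h

      · exact hb.1 h

      · exact hb.2 h

    rw [← Finset.sum_subset (Finset.subset_univ ({b0, b1} : Finset (Fin D.n))) hzero]

    rw [Finset.sum_pair (Ne.symm hb1ne), hL, List.count_append]

    congr 1

    · rw [← hi0]; exact countP_eq_count_targets _ _ (D.emb_inj b0) i0 w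

    · rw [← hi1]; exact countP_eq_count_targets _ _ (D.emb_inj b1) i1 w

  -- facts about a tip of an outfork block at o

  have tipfacts : ∀ (b : Fin D.n) (i : Fin (D.shape b).numNodes),

      D.shape b = BlockShape.outfork → (i : ℕ) = 2 → D.emb b i = o →

      ∀ j ∈ BlockShape.targets (D.shape b) i,

        (∀ z, mult (D.emb b j) z = 0) ∧

        (∀ z, mult z (D.emb b j) = if z = o then 1 else 0) ∧ D.emb b j ≠ o := by

    intro b i hsb hi2 hio j hj

    obtain ⟨hjne2, hsrc, htgt⟩ := (BlockShape.center_facts _ hsb i hi2).2.2 j hj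

    have hnotin := notin b hsb j hjne2

    refine ⟨?_, ?_, ?_⟩

    · intro z

      rw [mult_def]

      refine Finset.sum_eq_zero fun c _ => ?_

      by_cases hc : c = b

      · subst hc

        rw [countP_eq_count_targets _ _ (D.emb_inj c) j z, htgt]

        simp

      · exact (countP_zero_of_not_mem _ _ _ (fun k => hnotin c hc k) z).1

    · intro z

      rw [mult_def]

      rw [Finset.sum_eq_single b]

      · rw [countP_eq_count_sources _ _ (D.emb_inj b) j z, hsrc]

        simp only [List.map_cons, List.map_nil, hio]

        by_cases hz : z = o <;> simp [hz, List.count_singleton, @eq_comm _ o z]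

      · intro c _ hc

        exact (countP_zero_of_not_mem _ _ _ (fun k => hnotin c hc k) z).2

      · intro hb; exact absurd (Finset.mem_univ b) hb

    · intro heq

      have : j = i := D.emb_inj b (by rw [heq, hio])

      rw [this] at hjne2

      exact hjne2 hi2

  have tipL : ∀ w ∈ L, (∀ z, mult w z = 0) ∧

      (∀ z, mult z w = if z = o then 1 else 0) ∧ w ≠ o := by

    intro w hw

    rcases List.mem_append.1 hw with h | h

    · obtain ⟨j, hj, rfl⟩ := List.mem_map.1 h

      exact tipfacts b0 i0 hs0 hi02 hi0 j hj

    · obtain ⟨j, hj, rfl⟩ := List.mem_map.1 h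

      exact tipfacts b1 i1 hs1 hi12 hi1 j hj

  -- graph values

  have hGwo : ∀ w, G w o = 0 := by

    intro w

    have e := D.edge_eq w o

    change G w o = mult w o - mult o w at e

    rw [multin w] at e

    simpa using e

  have hGow : ∀ w, G o w = L.count w := by

    intro w

    have e := D.edge_eq o w

    change G o w = mult o w - mult w o at e

    rw [multin w, multo w] at e

    simpa using e

  have hGtip : ∀ w ∈ L, (∀ z, G w z = 0) ∧ (∀ z, G z w = if z = o then 1 else 0) := by

    intro w hw

    obtain ⟨hm1, hm2, hwo⟩ := tipL w hw

    constructor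

    · intro z

      have e := D.edge_eq w z

      change G w z = mult w z - mult z w at e

      rw [hm1 z] at e

      simpa using e

    · intro z

      have e := D.edge_eq z w

      change G z w = mult z w - mult w z at e

      rw [hm1 z, hm2 z] at e

      simpa using e

  have hdegtip : ∀ w ∈ L, degree G w = 1 := by

    intro w hw

    obtain ⟨h1, h2⟩ := hGtip w hw

    unfold degree

    have : ∀ z, G w z + G z w = if z = o then 1 else 0 := by

      intro z; rw [h1 z, h2 z]; simp

    rw [Finset.sum_congr rfl fun z _ => this z]

    simp

  -- L has four distinct elements, none equal to o

  have hlen : L.length = 4 := by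

    rw [hL, List.length_append, List.length_map, List.length_map, hc0.1, hc1.1]

  have hnodupL : L.Nodup := by

    rw [hL, List.nodup_append]

    refine ⟨(BlockShape.targets_nodup _ i0).map (D.emb_inj b0),

      (BlockShape.targets_nodup _ i1).map (D.emb_inj b1), ?_⟩

    intro w h1 w' h2 hww'

    obtain ⟨j, hj, rfl⟩ := List.mem_map.1 h1

    obtain ⟨k, hk, heq⟩ := List.mem_map.1 h2

    have hjne2 := ((BlockShape.center_facts _ hs0 i0 hi02).2.2 j hj).1

    exact notin b0 hs0 j hjne2 b1 hb1ne k (heq.trans hww'.symm)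

  have hoL : o ∉ L := fun h => (tipL o h).2.2 rfl

  -- adjacency characterizations

  have adj_o : ∀ x, Adj G o x ↔ x ∈ L := by

    intro x

    unfold Adj

    rw [hGow, hGwo, Nat.add_zero]

    exact List.count_pos_iff

  have adj_tip : ∀ w ∈ L, ∀ z, Adj G w z ↔ z = o := by

    intro w hw z

    obtain ⟨h1, h2⟩ := hGtip w hw

    unfold Adj

    rw [h1 z, h2 z, Nat.zero_add]

    by_cases hz : z = o <;> simp [hz]

  set S : Finset V := insert o L.toFinset with hS

  have hreach : ∀ x, Reach G o x ↔ x ∈ S := by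

    intro x

    constructor

    · intro h

      induction h with

      | refl => exact Finset.mem_insert_self _ _

      | tail h1 h2 ih =>

        rcases Finset.mem_insert.1 ih with rfl | hb

        · exact Finset.mem_insert_of_mem (List.mem_toFinset.2 ((adj_o _).1 h2))

        · rw [(adj_tip _ (List.mem_toFinset.1 hb) _).1 h2]

          exact Finset.mem_insert_self _ _

    · intro h

      rcases Finset.mem_insert.1 h with rfl | hx

      · exact Relation.ReflTransGen.refl

      · exact Relation.ReflTransGen.single ((adj_o x).2 (List.mem_toFinset.1 hx))

  have hcomp : component G o = S := by

    ext x

    simp only [component, Finset.mem_filter, Finset.mem_univ, true_and]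

    exact hreach x

  have hcard : (component G o).card = 5 := by

    rw [hcomp, hS, Finset.card_insert_of_notMem (by simpa using hoL),

      List.toFinset_card_of_nodup hnodupL, hlen]

  refine ⟨⟨b0, b1, Ne.symm hb1ne, hs0, hs1, ⟨i0, hi0, hi02⟩, ⟨i1, hi1, hi12⟩, onlyb⟩,

    ?_, hcard, ?_⟩

  · intro w hw

    rw [hGow] at hw

    exact hdegtip w (List.count_pos_iff.1 (Nat.pos_of_ne_zero hw))

  · intro x hx hxo

    rw [hcomp, hS] at hx

    rcases Finset.mem_insert.1 hx with rfl | hx'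

    · exact absurd rfl hxo

    · have hxL := List.mem_toFinset.1 hx'

      refine ⟨?_, hGwo x, hdegtip x hxL⟩

      rw [hGow]

      exact List.count_eq_one_of_mem hnodupL hxL





end Main

namespace BlockShape



/-- The reversed shape. -/

def rev : BlockShape → BlockShape

  | spike => spike | triangle => triangle | infork => outfork

  | outfork => infork | diamond => diamond | square => square



/-- Node relabelling from the reversed shape back to the original shape. -/

def sigma : (s : BlockShape) → Fin s.rev.numNodes → Fin s.numNodes

  | spike, i => (![1, 0] : Fin 2 → Fin 2) i

  | triangle, i => (![0, 2, 1] : Fin 3 → Fin 3) i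

  | infork, i => i

  | outfork, i => i

  | diamond, i => (![1, 0, 2, 3] : Fin 4 → Fin 4) i

  | square, i => (![0, 2, 1, 4, 3] : Fin 5 → Fin 5) i



lemma sigma_inj : ∀ s : BlockShape, Function.Injective (sigma s) := by

  intro s; cases s <;> decide



lemma sigma_surj : ∀ s : BlockShape, Function.Surjective (sigma s) := by

  intro s; cases s <;> decide



lemma rev_edges_perm : ∀ s : BlockShape,

    (s.rev.edges.map (fun e => ((sigma s e.2, sigma s e.1) :

      Fin s.numNodes × Fin s.numNodes))).Perm s.edges := by

  intro s; cases s <;> decide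



/-- Boolean outlet predicate. -/

def outletB : (s : BlockShape) → Fin s.numNodes → Bool

  | spike, _ => true

  | triangle, _ => true

  | infork, i => decide ((i : ℕ) = 2)

  | outfork, i => decide ((i : ℕ) = 2)

  | diamond, i => decide ((i : ℕ) = 0 ∨ (i : ℕ) = 1)

  | square, i => decide ((i : ℕ) = 0)



lemma isOutlet_iff_outletB : ∀ (s : BlockShape) (i : Fin s.numNodes),

    IsOutlet s i ↔ outletB s i = true := by

  intro s; cases s <;> intro i <;> simp [IsOutlet, outletB]



lemma outletB_sigma : ∀ (s : BlockShape) (i : Fin s.rev.numNodes),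

    outletB s.rev i = outletB s (sigma s i) := by

  intro s; cases s <;> decide



lemma isOutlet_rev : ∀ (s : BlockShape) (i : Fin s.rev.numNodes),

    IsOutlet s (sigma s i) → IsOutlet s.rev i := by

  intro s i h

  rw [isOutlet_iff_outletB, outletB_sigma]

  rw [isOutlet_iff_outletB] at h

  exact h



lemma rev_eq_outfork : ∀ s : BlockShape, s.rev = outfork → s = infork := by

  intro s; cases s <;> simp [rev]



lemma sigma_coe_infork : ∀ s : BlockShape, s = infork →

    ∀ i : Fin s.rev.numNodes, (i : ℕ) = 2 → ((sigma s i : ℕ)) = 2 := by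

  rintro s rfl; decide



end BlockShape



section Transpose

variable {V : Type} [Fintype V] [DecidableEq V] {G : V → V → ℕ}



/-- The transposed block decomposition, decomposing the reversed graph. -/

def BlockDecomposition.transpose (D : BlockDecomposition G) :

    BlockDecomposition (fun x y => G y x) where

  n := D.n

  shape := fun b => (D.shape b).rev

  emb := fun b i => D.emb b (BlockShape.sigma _ i)

  emb_inj := fun b h1 h2 h => BlockShape.sigma_inj _ (D.emb_inj b h)

  glue_outlets := fun b c i j h hbc => by

    obtain ⟨h1, h2⟩ := D.glue_outlets b c _ _ h hbc

    exact ⟨BlockShape.isOutlet_rev _ _ h1, BlockShape.isOutlet_rev _ _ h2⟩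

  atMostTwo := fun b c d i j k h1 h2 => D.atMostTwo b c d _ _ _ h1 h2

  covers := fun v => by

    obtain ⟨b, i, hi⟩ := D.covers v

    obtain ⟨i', hi'⟩ := BlockShape.sigma_surj (D.shape b) i

    exact ⟨b, i', by show D.emb b (BlockShape.sigma _ i') = v; rw [hi']; exact hi⟩

  edge_eq := by

    have key : ∀ x y : V, blockMult D.n (fun b => (D.shape b).rev)

        (fun b i => D.emb b (BlockShape.sigma _ i)) x y =

        blockMult D.n D.shape D.emb y x := by

      intro x y

      unfold blockMult

      refine Finset.sum_congr rfl fun b _ => ?_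

      have h1 : ((D.shape b).rev.edges.map (fun e =>

            ((BlockShape.sigma _ e.2, BlockShape.sigma _ e.1) :

              Fin (D.shape b).numNodes × Fin (D.shape b).numNodes))).countP

            (fun e => decide (D.emb b e.1 = y ∧ D.emb b e.2 = x)) =

          (D.shape b).edges.countP (fun e => decide (D.emb b e.1 = y ∧ D.emb b e.2 = x)) :=

        (BlockShape.rev_edges_perm (D.shape b)).countP_eq _

      rw [← h1, List.countP_map]

      refine List.countP_congr fun e _ => ?_

      simp only [Function.comp, decide_eq_true_eq, decide_eq_decide]

      exact and_comm

    intro x y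

    rw [key x y, key y x]

    exact D.edge_eq y x



lemma degree_flip (w : V) : degree (fun x y => G y x) w = degree G w := by

  unfold degree

  exact Finset.sum_congr rfl fun z _ => Nat.add_comm _ _



lemma adj_flip : Adj (fun x y => G y x) = Adj G := by

  funext x y

  unfold Adj

  rw [Nat.add_comm]



lemma component_flip (o : V) : component (fun x y => G y x) o = component G o := by

  have hR : Reach (fun x y => G y x) = Reach G := by unfold Reach; rw [adj_flip]

  ext x

  simp only [component, Finset.mem_filter, Finset.mem_univ, true_and, hR]



end Transpose

/-- if a node `o` of a block-decomposable graph has four outgoing edges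
and no incoming edges (resp. four incoming and no outgoing), then in every block
decomposition `o` is the identification of the outlets of two outfork (resp. infork)
blocks; each of the four neighbors has degree 1 and the connected component of `o`
is the 5-node star with all edges directed away from (resp. toward) `o`. -/
theorem stmt_9 {V : Type} [Fintype V] [DecidableEq V] (G : V → V → ℕ)
    (hG : IsDiGraph G) (hdec : Decomposable G) (o : V) :
    ((∑ w, G o w) = 4 ∧ (∑ w, G w o) = 0 →
      (∀ D : BlockDecomposition G, ∃ b b' : Fin D.n, b ≠ b' ∧
        D.shape b = BlockShape.outfork ∧ D.shape b' = BlockShape.outfork ∧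
        (∃ i, D.emb b i = o ∧ (i : ℕ) = 2) ∧ (∃ j, D.emb b' j = o ∧ (j : ℕ) = 2) ∧
        (∀ (c : Fin D.n) (k : Fin (D.shape c).numNodes), D.emb c k = o → c = b ∨ c = b')) ∧
      (∀ w, G o w ≠ 0 → degree G w = 1) ∧
      (component G o).card = 5 ∧
      (∀ x ∈ component G o, x ≠ o → G o x = 1 ∧ G x o = 0 ∧ degree G x = 1)) ∧
    ((∑ w, G w o) = 4 ∧ (∑ w, G o w) = 0 →
      (∀ D : BlockDecomposition G, ∃ b b' : Fin D.n, b ≠ b' ∧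
        D.shape b = BlockShape.infork ∧ D.shape b' = BlockShape.infork ∧
        (∃ i, D.emb b i = o ∧ (i : ℕ) = 2) ∧ (∃ j, D.emb b' j = o ∧ (j : ℕ) = 2) ∧
        (∀ (c : Fin D.n) (k : Fin (D.shape c).numNodes), D.emb c k = o → c = b ∨ c = b')) ∧
      (∀ w, G w o ≠ 0 → degree G w = 1) ∧
      (component G o).card = 5 ∧
      (∀ x ∈ component G o, x ≠ o → G x o = 1 ∧ G o x = 0 ∧ degree G x = 1)) := by
  constructor
  · rintro ⟨h4, h0⟩
    obtain ⟨D0⟩ := hdec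
    have hm := main_outfork G o h4 h0 D0
    exact ⟨fun D => (main_outfork G o h4 h0 D).1, hm.2.1, hm.2.2.1, hm.2.2.2⟩
  · rintro ⟨h4, h0⟩
    have h4' : ∑ w, (fun x y => G y x) o w = 4 := h4
    have h0' : ∑ w, (fun x y => G y x) w o = 0 := h0
    obtain ⟨D0⟩ := hdec
    have hm := main_outfork (fun x y => G y x) o h4' h0' D0.transpose
    refine ⟨?_, ?_, ?_, ?_⟩
    · intro D
      obtain ⟨b, b', hne, hs, hs', ⟨i, hio, hi2⟩, ⟨j, hjo, hj2⟩, huniq⟩ :=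
        (main_outfork (fun x y => G y x) o h4' h0' D.transpose).1
      refine ⟨b, b', hne, BlockShape.rev_eq_outfork _ hs,
        BlockShape.rev_eq_outfork _ hs', ?_, ?_, ?_⟩
      · exact ⟨BlockShape.sigma _ i, hio,
          BlockShape.sigma_coe_infork _ (BlockShape.rev_eq_outfork _ hs) i hi2⟩
      · exact ⟨BlockShape.sigma _ j, hjo,
          BlockShape.sigma_coe_infork _ (BlockShape.rev_eq_outfork _ hs') j hj2⟩
      · intro c k hk
        obtain ⟨k', hk'⟩ := BlockShape.sigma_surj (D.shape c) k
        refine huniq c k' ?_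
        show D.emb c (BlockShape.sigma _ k') = o
        rw [hk']; exact hk
    · intro w hw
      have := hm.2.1 w hw
      rwa [degree_flip] at this
    · have := hm.2.2.1
      rwa [component_flip] at this
    · intro x hx hxo
      rw [← component_flip o] at hx
      obtain ⟨h1, h2, h3⟩ := hm.2.2.2 x hx hxo
      exact ⟨h1, h2, by rwa [degree_flip] at h3⟩
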